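/- Exponential bound on the number of cuts with a given maximum frontier time: for any fixed T ∈ {0,…,N}, the number of distinct nonempty consistent cuts whose maximum frontier time equals T is at most (ε + 2)^n. -/
import Mathlib


/-- An event is a pair (stream index, timestamp), with streams `Fin n` and
timestamps `Fin (N+1)` (i.e. `{0,…,N}`). The generating relation `R` with
clock-skew bound `ε`: same-stream order, and cross-stream order with skew. -/
def genR (n N ε : ℕ) (e f : Fin n × Fin (N + 1)) : Prop :=
  (e.1 = f.1 ∧ e.2 < f.2) ∨ (e.2 : ℕ) + ε < (f.2 : ℕ)

/-- The happened-before relation `⇝` with skew `ε`: transitive closure of `R`. -/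
def hb (n N ε : ℕ) : Fin n × Fin (N + 1) → Fin n × Fin (N + 1) → Prop :=
  Relation.TransGen (genR n N ε)

/-- A consistent cut: a set `C` of events such that `e ∈ C` and `f ⇝ e` imply `f ∈ C`. -/
def ConsistentCut (n N ε : ℕ) (C : Set (Fin n × Fin (N + 1))) : Prop :=
  ∀ e ∈ C, ∀ f, hb n N ε f e → f ∈ C

/-- The maximum frontier time of a cut: the largest timestamp occurring in `C`
(equivalently, the maximum of the per-stream frontier times `m_i(C)`). -/
noncomputable def maxFrontierTime (n N : ℕ) (C : Set (Fin n × Fin (N + 1))) : ℕ :=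
  sSup {t : ℕ | ∃ e ∈ C, (e.2 : ℕ) = t}

/-- Auxiliary: per-stream frontier time. -/
noncomputable def mAux (n N : ℕ) (C : Set (Fin n × Fin (N + 1))) (i : Fin n) : ℕ :=
  sSup {t : ℕ | ∃ s : Fin (N + 1), (s : ℕ) = t ∧ (i, s) ∈ C}

open Classical in
/-- Auxiliary: encoding of a cut. -/
noncomputable def vAux (n N ε T : ℕ) (C : Set (Fin n × Fin (N + 1))) (i : Fin n) : ℕ :=
  if ∃ s : Fin (N + 1), (i, s) ∈ C then mAux n N C i + ε + 1 - T else 0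

/-- for any fixed `T ∈ {0,…,N}`, the number of distinct nonempty
consistent cuts whose maximum frontier time equals `T` is at most `(ε + 2)^n`. -/
theorem card_cuts_with_max_frontier (n N ε : ℕ) (hn : 1 ≤ n) (hε : 1 ≤ ε)
    (T : ℕ) (hT : T ≤ N) :
    Set.ncard {C : Set (Fin n × Fin (N + 1)) |
        ConsistentCut n N ε C ∧ C.Nonempty ∧ maxFrontierTime n N C = T} ≤
      (ε + 2) ^ n := by
  classical
  set S : Set (Set (Fin n × Fin (N + 1))) :=
    {C | ConsistentCut n N ε C ∧ C.Nonempty ∧ maxFrontierTime n N C = T} with hSdef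
  -- per-stream frontier time
  have hbddA : ∀ (C : Set (Fin n × Fin (N + 1))) (i : Fin n),
      BddAbove {t : ℕ | ∃ s : Fin (N + 1), (s : ℕ) = t ∧ (i, s) ∈ C} := by
    intro C i
    refine ⟨N, ?_⟩
    rintro t ⟨s, rfl, -⟩
    exact Nat.lt_succ_iff.mp s.isLt
  have hbddT : ∀ C : Set (Fin n × Fin (N + 1)),
      BddAbove {t : ℕ | ∃ e ∈ C, ((e.2 : ℕ)) = t} := by
    intro C
    refine ⟨N, ?_⟩
    rintro t ⟨e, -, rfl⟩
    exact Nat.lt_succ_iff.mp e.2.isLt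
  -- every event timestamp is ≤ T
  have hle : ∀ C ∈ S, ∀ e ∈ C, (e.2 : ℕ) ≤ T := by
    intro C hC e he
    have h1 : (e.2 : ℕ) ≤ sSup {t : ℕ | ∃ e ∈ C, ((e.2 : ℕ)) = t} :=
      le_csSup (hbddT C) ⟨e, he, rfl⟩
    have h2 : maxFrontierTime n N C = T := hC.2.2
    rw [maxFrontierTime] at h2
    omega
  -- the max frontier time is attained
  have hexT : ∀ C ∈ S, ∃ e ∈ C, (e.2 : ℕ) = T := by
    intro C hC
    obtain ⟨e0, he0⟩ := hC.2.1
    have hne : {t : ℕ | ∃ e ∈ C, ((e.2 : ℕ)) = t}.Nonempty := ⟨_, e0, he0, rfl⟩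
    have hmem := Nat.sSup_mem hne (hbddT C)
    have h2 : maxFrontierTime n N C = T := hC.2.2
    rw [maxFrontierTime] at h2
    rw [h2] at hmem
    exact hmem
  -- closure: any event more than ε before T is in the cut
  have hclosure : ∀ C ∈ S, ∀ f : Fin n × Fin (N + 1), (f.2 : ℕ) + ε < T → f ∈ C := by
    intro C hC f hf
    obtain ⟨e, he, heT⟩ := hexT C hC
    exact hC.1 e he f (Relation.TransGen.single (Or.inr (by omega)))
  -- the per-stream sup is attained when the stream is nonempty
  have hmem_m : ∀ C ∈ S, ∀ i : Fin n, (∃ s : Fin (N + 1), (i, s) ∈ C) →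
      ∃ s : Fin (N + 1), (s : ℕ) = mAux n N C i ∧ (i, s) ∈ C := by
    intro C hC i hi
    obtain ⟨s, hs⟩ := hi
    have hA : ((s : ℕ)) ∈ {t : ℕ | ∃ s' : Fin (N + 1), (s' : ℕ) = t ∧ (i, s') ∈ C} :=
      ⟨s, rfl, hs⟩
    have := Nat.sSup_mem ⟨_, hA⟩ (hbddA C i)
    simpa [mAux] using this
  have hmle : ∀ C ∈ S, ∀ i : Fin n, (∃ s : Fin (N + 1), (i, s) ∈ C) → mAux n N C i ≤ T := by
    intro C hC i hi
    obtain ⟨s, hs, hsC⟩ := hmem_m C hC i hi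
    have := hle C hC (i, s) hsC
    simpa [hs] using this
  have hTlm : ∀ C ∈ S, ∀ i : Fin n, (∃ s : Fin (N + 1), (i, s) ∈ C) →
      T ≤ mAux n N C i + ε + 1 := by
    intro C hC i hi
    by_contra hcon
    push_neg at hcon
    have hlt : mAux n N C i + 1 < N + 1 := by omega
    have hf : ((i, (⟨mAux n N C i + 1, hlt⟩ : Fin (N + 1))) : Fin n × Fin (N + 1)) ∈ C :=
      hclosure C hC _ (by simpa using (by omega : mAux n N C i + 1 + ε < T))
    have : mAux n N C i + 1 ≤ mAux n N C i :=
      le_csSup (hbddA C i) ⟨⟨mAux n N C i + 1, hlt⟩, rfl, hf⟩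
    omega
  -- membership in a cut is determined by the per-stream frontiers
  have hmem_iff : ∀ C ∈ S, ∀ (i : Fin n) (s : Fin (N + 1)),
      (i, s) ∈ C ↔ (∃ s' : Fin (N + 1), (i, s') ∈ C) ∧ (s : ℕ) ≤ mAux n N C i := by
    intro C hC i s
    constructor
    · intro h
      exact ⟨⟨s, h⟩, le_csSup (hbddA C i) ⟨s, rfl, h⟩⟩
    · rintro ⟨hne_i, hsle⟩
      obtain ⟨s0, hs0, hs0C⟩ := hmem_m C hC i hne_i
      rcases eq_or_lt_of_le hsle with heq | hlt
      · have : s = s0 := Fin.ext (by omega)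
        rwa [this]
      · exact hC.1 (i, s0) hs0C (i, s)
          (Relation.TransGen.single (Or.inl ⟨rfl, show s < s0 from Fin.lt_def.mpr (by omega)⟩))
  -- the encoding of a cut
  have hv_le : ∀ C ∈ S, ∀ i : Fin n, vAux n N ε T C i ≤ ε + 1 := by
    intro C hC i
    by_cases h : ∃ s : Fin (N + 1), (i, s) ∈ C
    · have := hmle C hC i h
      simp only [vAux, if_pos h]
      omega
    · simp [vAux, h]
  have hv_inj : ∀ C ∈ S, ∀ C' ∈ S, (∀ i, vAux n N ε T C i = vAux n N ε T C' i) → C = C' := by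
    intro C hC C' hC' hv
    ext ⟨i, s⟩
    have h := hv i
    by_cases h1 : ∃ s' : Fin (N + 1), (i, s') ∈ C <;>
      by_cases h2 : ∃ s' : Fin (N + 1), (i, s') ∈ C'
    · simp only [vAux, if_pos h1, if_pos h2] at h
      have hb1 := hTlm C hC i h1
      have hb2 := hTlm C' hC' i h2
      have hmm : mAux n N C i = mAux n N C' i := by omega
      rw [hmem_iff C hC i s, hmem_iff C' hC' i s, hmm]
      exact ⟨fun ⟨_, hle'⟩ => ⟨h2, hle'⟩, fun ⟨_, hle'⟩ => ⟨h1, hle'⟩⟩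
    · -- stream nonempty in C, empty in C' : impossible
      exfalso
      simp only [vAux, if_pos h1, if_neg h2] at h
      have hb1 := hTlm C hC i h1
      have hlt : mAux n N C i + ε < T := by omega
      have hltN : mAux n N C i < N + 1 := by omega
      exact h2 ⟨⟨mAux n N C i, hltN⟩, hclosure C' hC' _ (by simpa using hlt)⟩
    · exfalso
      simp only [vAux, if_neg h1, if_pos h2] at h
      have hb2 := hTlm C' hC' i h2
      have hlt : mAux n N C' i + ε < T := by omega
      have hltN : mAux n N C' i < N + 1 := by omega
      exact h1 ⟨⟨mAux n N C' i, hltN⟩, hclosure C hC _ (by simpa using hlt)⟩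
    · constructor
      · intro hmem; exact absurd ⟨s, hmem⟩ h1
      · intro hmem; exact absurd ⟨s, hmem⟩ h2
  -- the injection into `Fin n → Fin (ε+2)`
  let F : S → (Fin n → Fin (ε + 2)) := fun C i => ⟨min (vAux n N ε T C.1 i) (ε + 1), by omega⟩
  have hFinj : Function.Injective F := by
    rintro ⟨C, hC⟩ ⟨C', hC'⟩ h
    have hveq : ∀ i, vAux n N ε T C i = vAux n N ε T C' i := by
      intro i
      have h3 := congrFun h i
      have h1 := hv_le C hC i
      have h2 := hv_le C' hC' i
      have h4 : min (vAux n N ε T C i) (ε + 1) = min (vAux n N ε T C' i) (ε + 1) := congrArg Fin.val h3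
      omega
    exact Subtype.ext (hv_inj C hC C' hC' hveq)
  calc S.ncard = Nat.card S := (Nat.card_coe_set_eq S).symm
    _ ≤ Nat.card (Fin n → Fin (ε + 2)) := Nat.card_le_card_of_injective F hFinj
    _ = (ε + 2) ^ n := by simp [Nat.card_eq_fintype_card]
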